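/- Let G and H be simple graphs on n vertices that share n−1 cards, and let r ≥ 1 be an integer. If κ_r(G) = κ_r(H), then the multiset of K_r-degrees {deg_r(v,G) : v ∈ V(G)} equals the multiset {deg_r(v,H) : v ∈ V(H)}. -/

import Mathlib

open SimpleGraph

/-- `kappa G r` is the number of `r`-cliques of the graph `G`. -/
noncomputable def kappa {V : Type*} (G : SimpleGraph V) (r : ℕ) : ℕ :=
  (G.cliqueSet r).ncard

/-- `degR G r v` is the number of `r`-cliques of `G` that contain the vertex `v`. -/
noncomputable def degR {V : Type*} (G : SimpleGraph V) (r : ℕ) (v : V) : ℕ :=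
  {s | s ∈ G.cliqueSet r ∧ v ∈ s}.ncard

/-- `deg G v` is the degree of the vertex `v` in `G`. -/
noncomputable def deg {V : Type*} (G : SimpleGraph V) (v : V) : ℕ :=
  (G.neighborSet v).ncard

/-- `gcard G v` is the card `G - v`: the induced subgraph of `G` on `V(G) \ {v}`. -/
def gcard {V : Type*} (G : SimpleGraph V) (v : V) : SimpleGraph {x : V // x ≠ v} :=
  G.induce {x : V | x ≠ v}

/-- The maximum degree `Δ(G)`. -/
noncomputable def maxDeg {n : ℕ} (G : SimpleGraph (Fin n)) : ℕ :=
  Finset.univ.sup (fun v => deg G v)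

/-- The minimum degree `δ(G)`. -/
noncomputable def minDeg {n : ℕ} (G : SimpleGraph (Fin n)) : ℕ :=
  sInf (Set.range (fun v => deg G v))

/-- `ℓ(G)`: the number of vertices of maximum degree. -/
noncomputable def numMaxDeg {n : ℕ} (G : SimpleGraph (Fin n)) : ℕ :=
  (Finset.univ.filter (fun v => deg G v = maxDeg G)).card

/-- `G` and `H` share `n-1` cards via the vertices `u`, `w` and the bijection `π`:
for every `v ≠ u`, the card `G - v` is isomorphic to the card `H - π(v)`. -/
def ShareCardsVia {n : ℕ} (G H : SimpleGraph (Fin n)) (u w : Fin n)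
    (π : {x : Fin n // x ≠ u} ≃ {y : Fin n // y ≠ w}) : Prop :=
  ∀ v : {x : Fin n // x ≠ u}, Nonempty (gcard G v.1 ≃g gcard H (π v).1)

/-- `G` and `H` share `n-1` cards. -/
def ShareCards {n : ℕ} (G H : SimpleGraph (Fin n)) : Prop :=
  ∃ (u w : Fin n) (π : {x : Fin n // x ≠ u} ≃ {y : Fin n // y ≠ w}),
    ShareCardsVia G H u w π

open Finset

lemma isNClique_iso {α β : Type*} {A : SimpleGraph α} {B : SimpleGraph β}
    (e : A ≃g B) (r : ℕ) (s : Finset α) :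
    A.IsNClique r s ↔ B.IsNClique r (s.map e.toEquiv.toEmbedding) := by
  simp only [isNClique_iff, Finset.card_map, and_congr_left_iff]
  intro _
  constructor
  · intro h x hx y hy hxy
    simp only [Finset.mem_coe, Finset.mem_map, Equiv.coe_toEmbedding] at hx hy
    obtain ⟨a, ha, rfl⟩ := hx
    obtain ⟨b, hb, rfl⟩ := hy
    exact e.map_adj_iff.2 (h ha hb (fun hab => hxy (by rw [hab])))
  · intro h a ha b hb hab
    exact e.map_adj_iff.1 (h (Finset.mem_coe.2 (Finset.mem_map.2 ⟨a, ha, rfl⟩))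
      (Finset.mem_coe.2 (Finset.mem_map.2 ⟨b, hb, rfl⟩))
      (fun habe => hab (e.toEquiv.injective habe)))

lemma cliqueSet_iso {α β : Type*} {A : SimpleGraph α} {B : SimpleGraph β}
    (e : A ≃g B) (r : ℕ) :
    B.cliqueSet r = (fun s => s.map e.toEquiv.toEmbedding) '' A.cliqueSet r := by
  ext t
  constructor
  · intro ht
    refine ⟨t.map e.symm.toEquiv.toEmbedding, ?_, ?_⟩
    · rw [mem_cliqueSet_iff, isNClique_iso e r]
      have : (t.map e.symm.toEquiv.toEmbedding).map e.toEquiv.toEmbedding = t := by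
        rw [Finset.map_map]
        convert Finset.map_refl
        ext x
        simp
      rw [this]; exact ht
    · show (t.map e.symm.toEquiv.toEmbedding).map e.toEquiv.toEmbedding = t
      rw [Finset.map_map]
      convert Finset.map_refl
      ext x; simp
  · rintro ⟨s, hs, rfl⟩
    exact (isNClique_iso e r s).1 hs

lemma kappa_iso {α β : Type*} {A : SimpleGraph α} {B : SimpleGraph β}
    (e : A ≃g B) (r : ℕ) : kappa A r = kappa B r := by
  rw [kappa, kappa, cliqueSet_iso e r,
    Set.ncard_image_of_injective _ (Finset.map_injective _)]

lemma isNClique_gcard {V : Type*} (G : SimpleGraph V) (v : V) (r : ℕ)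
    (s : Finset {x : V // x ≠ v}) :
    (gcard G v).IsNClique r s ↔
      G.IsNClique r (s.map (Function.Embedding.subtype _)) := by
  simp only [isNClique_iff, Finset.card_map, and_congr_left_iff]
  intro _
  constructor
  · intro h x hx y hy hxy
    simp only [Finset.mem_coe, Finset.mem_map, Function.Embedding.coe_subtype] at hx hy
    obtain ⟨a, ha, rfl⟩ := hx
    obtain ⟨b, hb, rfl⟩ := hy
    exact h ha hb (fun hab => hxy (by rw [hab]))
  · intro h a ha b hb hab
    exact h (Finset.mem_coe.2 (Finset.mem_map.2 ⟨a, ha, rfl⟩))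
      (Finset.mem_coe.2 (Finset.mem_map.2 ⟨b, hb, rfl⟩))
      (fun habe => hab (Subtype.coe_injective habe))

lemma kappa_split {n : ℕ} (G : SimpleGraph (Fin n)) (r : ℕ) (v : Fin n) :
    kappa G r = kappa (gcard G v) r + degR G r v := by
  classical
  have himg : {s | s ∈ G.cliqueSet r ∧ v ∉ s} =
      (fun t : Finset {x : Fin n // x ≠ v} => t.map (Function.Embedding.subtype _)) ''
        (gcard G v).cliqueSet r := by
    ext s
    constructor
    · rintro ⟨hs, hv⟩
      have hfil : s.filter (fun x => x ≠ v) = s :=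
        Finset.filter_eq_self.2 (fun x hx h => hv (h ▸ hx))
      refine ⟨s.subtype (fun x => x ≠ v), ?_, ?_⟩
      · rw [mem_cliqueSet_iff, isNClique_gcard, Finset.subtype_map, hfil]
        exact hs
      · simp only
        rw [Finset.subtype_map, hfil]
    · rintro ⟨t, ht, rfl⟩
      refine ⟨(isNClique_gcard G v r t).1 ht, ?_⟩
      simp only [Finset.mem_map, Function.Embedding.coe_subtype]
      rintro ⟨⟨a, ha⟩, _, hav⟩
      exact ha hav
  have hsplit : G.cliqueSet r =
      {s | s ∈ G.cliqueSet r ∧ v ∉ s} ∪ {s | s ∈ G.cliqueSet r ∧ v ∈ s} := by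
    ext s; by_cases h : v ∈ s <;> simp [h]
  have hdisj : Disjoint {s | s ∈ G.cliqueSet r ∧ v ∉ s} {s | s ∈ G.cliqueSet r ∧ v ∈ s} := by
    rw [Set.disjoint_left]; rintro s ⟨_, h⟩ ⟨_, h'⟩; exact h h'
  rw [kappa, hsplit, Set.ncard_union_eq hdisj (Set.toFinite _) (Set.toFinite _),
    himg, Set.ncard_image_of_injective _ (Finset.map_injective _)]
  rfl

lemma degR_sum {n : ℕ} (G : SimpleGraph (Fin n)) (r : ℕ) :
    ∑ v : Fin n, degR G r v = r * kappa G r := by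
  classical
  set C : Finset (Finset (Fin n)) := (G.cliqueSet r).toFinite.toFinset with hC
  have hdeg : ∀ v, degR G r v = (C.filter (fun s => v ∈ s)).card := by
    intro v
    rw [degR, Set.ncard_eq_toFinset_card _ (Set.toFinite _)]
    congr 1
    ext s
    simp [hC, Set.Finite.mem_toFinset]
  have hk : kappa G r = C.card := by
    rw [kappa, Set.ncard_eq_toFinset_card _ (Set.toFinite _)]
  simp only [hdeg, hk, Finset.card_filter]
  rw [Finset.sum_comm]
  have : ∀ s ∈ C, (∑ v : Fin n, if v ∈ s then 1 else 0) = r := by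
    intro s hs
    have hcard : s.card = r := by
      have hmem : s ∈ G.cliqueSet r := by
        rw [hC, Set.Finite.mem_toFinset] at hs; exact hs
      exact hmem.card_eq
    rw [← hcard, Finset.sum_ite_mem, Finset.univ_inter, Finset.card_eq_sum_ones]
  rw [Finset.sum_congr rfl this, Finset.sum_const, smul_eq_mul, mul_comm]

theorem cliqueDegreeSequence_eq {n : ℕ}
    (G H : SimpleGraph (Fin n)) (hshare : ShareCards G H)
    (r : ℕ) (hr : 1 ≤ r) (hk : kappa G r = kappa H r) :
    Finset.univ.val.map (fun v => degR G r v) =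
      Finset.univ.val.map (fun v => degR H r v) := by
  classical
  obtain ⟨u, w, π, hcards⟩ := hshare
  let e0 : {x : Fin n // x = u} ≃ {y : Fin n // y = w} :=
    ⟨fun _ => ⟨w, rfl⟩, fun _ => ⟨u, rfl⟩,
      by rintro ⟨x, rfl⟩; rfl, by rintro ⟨y, rfl⟩; rfl⟩
  let E : Equiv.Perm (Fin n) := Equiv.subtypeCongr e0 π
  have hEu : E u = w := by
    simp [E, Equiv.subtypeCongr, e0]
  have hEv : ∀ (v : Fin n) (h : v ≠ u), E v = (π ⟨v, h⟩).1 := by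
    intro v h
    have hs : (Equiv.sumCompl fun x => x = u).symm v = Sum.inr ⟨v, h⟩ :=
      Equiv.sumCompl_symm_apply_of_neg (p := fun x => x = u) h
    simp [E, Equiv.subtypeCongr, hs]
  have key1 : ∀ (v : Fin n) (h : v ≠ u), degR G r v = degR H r (π ⟨v, h⟩).1 := by
    intro v h
    have e := (hcards ⟨v, h⟩).some
    have h1 := kappa_split G r v
    have h2 := kappa_split H r (π ⟨v, h⟩).1
    have h3 : kappa (gcard G v) r = kappa (gcard H (π ⟨v, h⟩).1) r := kappa_iso e r
    omega
  have hsum : ∑ v : Fin n, degR G r v = ∑ v : Fin n, degR H r v := by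
    rw [degR_sum, degR_sum, hk]
  have hErase : ∑ v ∈ Finset.univ.erase u, degR G r v
      = ∑ y ∈ Finset.univ.erase w, degR H r y := by
    rw [show ∑ v ∈ Finset.univ.erase u, degR G r v
        = ∑ v ∈ Finset.univ.erase u, degR H r (E v) from
      Finset.sum_congr rfl (fun v hv => by
        have h : v ≠ u := (Finset.mem_erase.1 hv).1
        rw [hEv v h]; exact key1 v h)]
    rw [← Finset.sum_image (fun x _ y _ h => E.injective h)]
    congr 1
    ext y
    simp only [Finset.mem_image, Finset.mem_erase, Finset.mem_univ, and_true]
    constructor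
    · rintro ⟨x, hx, rfl⟩
      rw [hEv x hx]; exact (π ⟨x, hx⟩).2
    · intro hy
      refine ⟨E.symm y, ?_, by simp⟩
      intro h
      exact hy (by rw [← hEu, ← h, Equiv.apply_symm_apply])
  have key_u : degR G r u = degR H r w := by
    have h1 : degR G r u + ∑ v ∈ Finset.univ.erase u, degR G r v
        = ∑ v : Fin n, degR G r v := Finset.add_sum_erase _ _ (Finset.mem_univ u)
    have h2 : degR H r w + ∑ y ∈ Finset.univ.erase w, degR H r y
        = ∑ v : Fin n, degR H r v := Finset.add_sum_erase _ _ (Finset.mem_univ w)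
    omega
  have hall : ∀ v : Fin n, degR G r v = degR H r (E v) := by
    intro v
    by_cases h : v = u
    · subst h; rw [hEu]; exact key_u
    · rw [hEv v h]; exact key1 v h
  calc Finset.univ.val.map (fun v => degR G r v)
      = Finset.univ.val.map (fun v => degR H r (E v)) :=
        Multiset.map_congr rfl (fun v _ => hall v)
    _ = (Finset.univ.val.map E).map (fun v => degR H r v) := by
        rw [Multiset.map_map]; rfl
    _ = Finset.univ.val.map (fun v => degR H r v) := by
        have : (Finset.univ.map E.toEmbedding).val = (Finset.univ : Finset (Fin n)).val :=
          congrArg Finset.val (Finset.map_univ_equiv E)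
        rw [Finset.map_val] at this
        rw [show ⇑E.toEmbedding = ⇑E from rfl] at this
        rw [this]
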